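/- Assume F is nonempty. A vector β* ∈ F minimizes the linear objective (1−γ)·Σ_{s,a} μ₀(s)·π(a|s)·βᵀφ(s,a) over β ∈ F if and only if β* minimizes the weighted ℓ¹ error Σ_{s,a} μ₀(s)·π(a|s)·|Q^π(s,a) − βᵀφ(s,a)| over β ∈ F. -/

import Mathlib

open Finset

noncomputable section

/-- The Bellman operator `B_π` for policy `pol`. -/
def bellman {S A : Type*} [Fintype S] [Fintype A]
    (γ : ℝ) (r : S → A → ℝ) (T : S → A → S → ℝ) (pol : S → A → ℝ)
    (Q : S → A → ℝ) : S → A → ℝ :=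
  fun s a => r s a + γ * ∑ s', T s a s' * ∑ a', pol s' a' * Q s' a'

/-- over the feasible set `F = {β : βᵀφ ≥ B_π(βᵀφ)}`, minimizing the
linear objective `(1−γ)·Σ μ₀π·βᵀφ` is equivalent to minimizing the weighted ℓ¹ error
`Σ μ₀π·|Q^π − βᵀφ|`. -/
theorem stmt_1 {S A : Type*} [Fintype S] [Fintype A] [Nonempty S] [Nonempty A]
    {p : ℕ} (γ Rmax : ℝ) (hγ0 : 0 < γ) (hγ1 : γ < 1) (hR : 0 < Rmax)
    (r : S → A → ℝ) (hr : ∀ s a, r s a ∈ Set.Icc (0 : ℝ) Rmax)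
    (T : S → A → S → ℝ) (hT0 : ∀ s a s', 0 ≤ T s a s') (hT1 : ∀ s a, ∑ s', T s a s' = 1)
    (pol : S → A → ℝ) (hpol0 : ∀ s a, 0 ≤ pol s a) (hpol1 : ∀ s, ∑ a, pol s a = 1)
    (μ0 : S → ℝ) (hμ00 : ∀ s, 0 ≤ μ0 s) (hμ01 : ∑ s, μ0 s = 1)
    (φ : S → A → Fin p → ℝ)
    (Qpi : S → A → ℝ) (hQpi : ∀ s a, Qpi s a = bellman γ r T pol Qpi s a)
    (F : Set (Fin p → ℝ))
    (hF : F = {β : Fin p → ℝ | ∀ s a,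
      bellman γ r T pol (fun s' a' => ∑ i, β i * φ s' a' i) s a ≤ ∑ i, β i * φ s a i})
    (hFne : F.Nonempty)
    (βstar : Fin p → ℝ) (hβstar : βstar ∈ F) :
    (∀ β ∈ F,
        (1 - γ) * ∑ s, ∑ a, μ0 s * pol s a * ∑ i, βstar i * φ s a i ≤
        (1 - γ) * ∑ s, ∑ a, μ0 s * pol s a * ∑ i, β i * φ s a i) ↔
    (∀ β ∈ F,
        ∑ s, ∑ a, μ0 s * pol s a * |Qpi s a - ∑ i, βstar i * φ s a i| ≤
        ∑ s, ∑ a, μ0 s * pol s a * |Qpi s a - ∑ i, β i * φ s a i|) := by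
  -- every feasible β dominates Qpi pointwise
  have key : ∀ β ∈ F, ∀ s a, Qpi s a ≤ ∑ i, β i * φ s a i := by
    intro β hβ
    rw [hF] at hβ
    set Qβ : S → A → ℝ := fun s a => ∑ i, β i * φ s a i with hQβ
    set g : S × A → ℝ := fun q => Qpi q.1 q.2 - Qβ q.1 q.2 with hg
    have hne : (Finset.univ : Finset (S × A)).Nonempty := Finset.univ_nonempty
    set M : ℝ := Finset.univ.sup' hne g with hM
    have hle : ∀ s a, g (s, a) ≤ M := fun s a => Finset.le_sup' g (Finset.mem_univ _)
    obtain ⟨q, -, hq⟩ := Finset.exists_mem_eq_sup' hne g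
    have hMγ : M ≤ γ * M := by
      have h1 : Qpi q.1 q.2 - Qβ q.1 q.2 ≤
          γ * ∑ s', T q.1 q.2 s' * ∑ a', pol s' a' * (Qpi s' a' - Qβ s' a') := by
        have := hβ q.1 q.2
        have hQ := hQpi q.1 q.2
        simp only [bellman] at this hQ
        have : Qpi q.1 q.2 - Qβ q.1 q.2 ≤
            (r q.1 q.2 + γ * ∑ s', T q.1 q.2 s' * ∑ a', pol s' a' * Qpi s' a') -
            (r q.1 q.2 + γ * ∑ s', T q.1 q.2 s' * ∑ a', pol s' a' * Qβ s' a') := by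
          rw [hQ]; linarith [this]
        calc Qpi q.1 q.2 - Qβ q.1 q.2 ≤ _ := this
          _ = γ * ∑ s', T q.1 q.2 s' * ∑ a', pol s' a' * (Qpi s' a' - Qβ s' a') := by
            simp only [mul_sub, Finset.sum_sub_distrib]
            ring
      have h2 : ∑ s', T q.1 q.2 s' * ∑ a', pol s' a' * (Qpi s' a' - Qβ s' a') ≤ M := by
        calc ∑ s', T q.1 q.2 s' * ∑ a', pol s' a' * (Qpi s' a' - Qβ s' a')
            ≤ ∑ s', T q.1 q.2 s' * ∑ a', pol s' a' * M := by
              apply Finset.sum_le_sum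
              intro s' _
              apply mul_le_mul_of_nonneg_left _ (hT0 _ _ _)
              apply Finset.sum_le_sum
              intro a' _
              exact mul_le_mul_of_nonneg_left (hle s' a') (hpol0 _ _)
          _ = M := by
              have : ∀ s' : S, (∑ a', pol s' a' * M) = M := by
                intro s'; rw [← Finset.sum_mul, hpol1, one_mul]
              simp only [this, ← Finset.sum_mul, hT1, one_mul]
      calc M = g q := by rw [hM, hq]
        _ = Qpi q.1 q.2 - Qβ q.1 q.2 := rfl
        _ ≤ γ * ∑ s', T q.1 q.2 s' * ∑ a', pol s' a' * (Qpi s' a' - Qβ s' a') := h1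
        _ ≤ γ * M := mul_le_mul_of_nonneg_left h2 hγ0.le
    have hM0 : M ≤ 0 := by nlinarith
    intro s a
    have := hle s a
    simp only [hg] at this
    linarith
  -- rewrite the ℓ¹ objective
  have abs_eq : ∀ β ∈ F,
      (∑ s, ∑ a, μ0 s * pol s a * |Qpi s a - ∑ i, β i * φ s a i|) =
      (∑ s, ∑ a, μ0 s * pol s a * ∑ i, β i * φ s a i) -
      (∑ s, ∑ a, μ0 s * pol s a * Qpi s a) := by
    intro β hβ
    rw [← Finset.sum_sub_distrib]
    apply Finset.sum_congr rfl
    intro s _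
    rw [← Finset.sum_sub_distrib]
    apply Finset.sum_congr rfl
    intro a _
    rw [abs_of_nonpos (by linarith [key β hβ s a])]
    ring
  have hγpos : (0:ℝ) < 1 - γ := by linarith
  constructor
  · intro h β hβ
    rw [abs_eq β hβ, abs_eq βstar hβstar]
    have := h β hβ
    have := (mul_le_mul_iff_right₀ hγpos).mp this
    linarith
  · intro h β hβ
    have := h β hβ
    rw [abs_eq β hβ, abs_eq βstar hβstar] at this
    have : (∑ s, ∑ a, μ0 s * pol s a * ∑ i, βstar i * φ s a i) ≤
        ∑ s, ∑ a, μ0 s * pol s a * ∑ i, β i * φ s a i := by linarith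
    exact mul_le_mul_of_nonneg_left this hγpos.le
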